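/- The stopping time 𝒯_d equals the following two-stage time: first wait until the diameter of Brownian Motion first reaches 2d (time δ_{2d}); at that moment B is at its running maximum or running minimum; then continue until B displays a drawdown of size d (if at the maximum) or a rise of size d (if at the minimum) measured from time δ_{2d} onward. -/

import Mathlib

open MeasureTheory ProbabilityTheory Set

/-- Standard one-dimensional Brownian Motion started at `0`:
measurable, continuous paths, independent Gaussian increments. -/
structure IsStdBM {Ω : Type*} [MeasurableSpace Ω] (P : Measure Ω) (B : ℝ → Ω → ℝ) : Prop where
  isProb : IsProbabilityMeasure P
  meas : ∀ t, Measurable (B t)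
  init : ∀ ω, B 0 ω = 0
  cont : ∀ ω, Continuous fun t => B t ω
  incr : ∀ s t : ℝ, 0 ≤ s → s ≤ t →
    Measure.map (fun ω => B t ω - B s ω) P = gaussianReal 0 (Real.toNNReal (t - s))
  indep : ∀ (n : ℕ) (t : Fin (n + 1) → ℝ), Monotone t → (∀ i, 0 ≤ t i) →
    iIndepFun
      (fun i : Fin n => fun ω => B (t i.succ) ω - B (t i.castSucc) ω) P

/-- Running maximum `M(t) = sup_{0 ≤ s ≤ t} B(s)`. -/
noncomputable def runMax {Ω : Type*} (B : ℝ → Ω → ℝ) (t : ℝ) (ω : Ω) : ℝ :=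
  sSup ((fun s => B s ω) '' Set.Icc 0 t)

/-- Running minimum `m(t) = inf_{0 ≤ s ≤ t} B(s)`. -/
noncomputable def runMin {Ω : Type*} (B : ℝ → Ω → ℝ) (t : ℝ) (ω : Ω) : ℝ :=
  sInf ((fun s => B s ω) '' Set.Icc 0 t)


open Set
namespace CalTAux
variable {f : ℝ → ℝ}

noncomputable def iS (f : ℝ → ℝ) (a b : ℝ) : ℝ := sSup (f '' Icc a b)
noncomputable def iI (f : ℝ → ℝ) (a b : ℝ) : ℝ := sInf (f '' Icc a b)

lemma img_ne {a b : ℝ} (h : a ≤ b) : (f '' Icc a b).Nonempty :=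
  (nonempty_Icc.2 h).image f
lemma bddA (hf : Continuous f) (a b : ℝ) : BddAbove (f '' Icc a b) := (isCompact_Icc.image hf).bddAbove
lemma bddB (hf : Continuous f) (a b : ℝ) : BddBelow (f '' Icc a b) := (isCompact_Icc.image hf).bddBelow
lemma le_iS (hf : Continuous f) {a b s : ℝ} (hs : s ∈ Icc a b) : f s ≤ iS f a b :=
  le_csSup (bddA hf a b) ⟨s, hs, rfl⟩
lemma iI_le (hf : Continuous f) {a b s : ℝ} (hs : s ∈ Icc a b) : iI f a b ≤ f s :=
  csInf_le (bddB hf a b) ⟨s, hs, rfl⟩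
lemma iS_le {a b c : ℝ} (h : a ≤ b) (hc : ∀ s ∈ Icc a b, f s ≤ c) : iS f a b ≤ c := by
  refine csSup_le (img_ne h) ?_
  rintro _ ⟨s, hs, rfl⟩; exact hc s hs
lemma le_iI {a b c : ℝ} (h : a ≤ b) (hc : ∀ s ∈ Icc a b, c ≤ f s) : c ≤ iI f a b := by
  refine le_csInf (img_ne h) ?_
  rintro _ ⟨s, hs, rfl⟩; exact hc s hs
lemma iS_mono (hf : Continuous f) {a b c : ℝ} (h : a ≤ b) (hbc : b ≤ c) : iS f a b ≤ iS f a c :=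
  csSup_le_csSup (bddA hf a c) (img_ne h) (image_mono (Icc_subset_Icc_right hbc))
lemma iI_anti (hf : Continuous f) {a b c : ℝ} (h : a ≤ b) (hbc : b ≤ c) : iI f a c ≤ iI f a b :=
  csInf_le_csInf (bddB hf a c) (img_ne h) (image_mono (Icc_subset_Icc_right hbc))
lemma exists_iS (hf : Continuous f) {a b : ℝ} (h : a ≤ b) : ∃ s ∈ Icc a b, f s = iS f a b := by
  obtain ⟨s, hs, hfs⟩ := (isCompact_Icc.image hf).sSup_mem (img_ne h)
  exact ⟨s, hs, hfs⟩
lemma exists_iI (hf : Continuous f) {a b : ℝ} (h : a ≤ b) : ∃ s ∈ Icc a b, f s = iI f a b := by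
  obtain ⟨s, hs, hfs⟩ := (isCompact_Icc.image hf).sInf_mem (img_ne h)
  exact ⟨s, hs, hfs⟩
lemma iS_split (hf : Continuous f) {a b c : ℝ} (hab : a ≤ b) (hbc : b ≤ c) :
    iS f a c = max (iS f a b) (iS f b c) := by
  unfold iS
  rw [← Icc_union_Icc_eq_Icc hab hbc, image_union,
    csSup_union (bddA hf a b) (img_ne hab) (bddA hf b c) (img_ne hbc)]
lemma iI_split (hf : Continuous f) {a b c : ℝ} (hab : a ≤ b) (hbc : b ≤ c) :
    iI f a c = min (iI f a b) (iI f b c) := by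
  unfold iI
  rw [← Icc_union_Icc_eq_Icc hab hbc, image_union,
    csInf_union (bddB hf a b) (img_ne hab) (bddB hf b c) (img_ne hbc)]
lemma iS_self (a : ℝ) : iS f a a = f a := by
  unfold iS; rw [Icc_self, image_singleton, csSup_singleton]
lemma iI_self (a : ℝ) : iI f a a = f a := by
  unfold iI; rw [Icc_self, image_singleton, csInf_singleton]

lemma cont_near (hf : Continuous f) (b : ℝ) {ε : ℝ} (hε : 0 < ε) :
    ∃ η > 0, ∀ s, |s - b| ≤ η → |f s - f b| < ε := by
  obtain ⟨η, hη, h⟩ := Metric.continuous_iff.mp hf b ε hε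
  exact ⟨η / 2, by positivity, fun s hs => h s (by rw [Real.dist_eq]; linarith)⟩

lemma half (hf : Continuous f) {d δ : ℝ} (hd : 0 < d) (hδ0 : 0 ≤ δ)
    (hval : iS f 0 δ - iI f 0 δ = 2 * d)
    (hlb : ∀ t, 0 ≤ t → iS f 0 t - iI f 0 t ≥ 2 * d → δ ≤ t)
    (hcase : f δ = iS f 0 δ) :
    sInf {t : ℝ | 0 ≤ t ∧ min (iS f 0 t - f t) (f t - iI f 0 t) ≥ d}
      = sInf {t : ℝ | δ ≤ t ∧ iS f δ t - f t ≥ d} := by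
  set ST := {t : ℝ | 0 ≤ t ∧ min (iS f 0 t - f t) (f t - iI f 0 t) ≥ d} with hSTdef
  set S' := {t : ℝ | δ ≤ t ∧ iS f δ t - f t ≥ d} with hS'def
  have hsub : ST ⊆ S' := by
    rintro t ⟨ht0, hmin⟩
    obtain ⟨h1, h2⟩ := le_min_iff.mp hmin
    have hδt : δ ≤ t := hlb t ht0 (by linarith)
    have hsp := iS_split hf hδ0 hδt
    have hle : iS f 0 δ ≤ iS f δ t := by
      rw [← hcase]; exact le_iS hf ⟨le_refl δ, hδt⟩
    have heq : iS f 0 t = iS f δ t := by rw [hsp, max_eq_right hle]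
    exact ⟨hδt, by rw [← heq]; exact h1⟩
  by_cases hne : S'.Nonempty
  · have hbdd : BddBelow S' := ⟨δ, fun t ht => ht.1⟩
    set c := sInf S' with hc
    have hδc : δ ≤ c := le_csInf hne fun t ht => ht.1
    have key : d ≤ iS f δ c - f c := by
      by_contra hk
      push_neg at hk
      set ε := (d - (iS f δ c - f c)) / 2 with hεdef
      have hεpos : 0 < ε := by simp only [hεdef]; linarith
      obtain ⟨η, hη, hcont⟩ := cont_near hf c hεpos
      obtain ⟨t, htS, htlt⟩ := exists_lt_of_csInf_lt hne (lt_add_of_pos_right c hη)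
      have hct : c ≤ t := csInf_le hbdd htS
      have h2 : iS f δ t = max (iS f δ c) (iS f c t) := iS_split hf hδc hct
      have h3 : iS f c t ≤ f c + ε := by
        refine iS_le hct fun s hs => ?_
        have := hcont s (abs_le.mpr ⟨by linarith [hs.1], by linarith [hs.2]⟩)
        have := (abs_sub_lt_iff.mp this).1
        linarith
      have h4 := hcont t (abs_le.mpr ⟨by linarith, by linarith⟩)
      have h8 : f c - ε < f t := by have := (abs_sub_lt_iff.mp h4).2; linarith
      have h5 : f c ≤ iS f δ c := le_iS hf ⟨hδc, le_refl c⟩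
      have h7 : iS f δ t ≤ iS f δ c + ε := by
        rw [h2]; exact max_le (by linarith) (by linarith)
      have h6 : d ≤ iS f δ t - f t := htS.2
      have : d < d := by
        calc d ≤ iS f δ t - f t := h6
        _ < iS f δ c + ε - (f c - ε) := by linarith
        _ = d := by simp only [hεdef]; ring
      exact lt_irrefl d this
    have hδltc : δ < c := by
      rcases hδc.lt_or_eq with h | h
      · exact h
      · exfalso; rw [← h, iS_self] at key; linarith
    have hlow : ∀ s, δ ≤ s → s < c → f δ - d < f s := by
      intro s hδs hsc
      have hns : s ∉ S' := fun hmem => absurd (csInf_le hbdd hmem) (not_le.mpr hsc)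
      have h1 : ¬ (iS f δ s - f s ≥ d) := fun h => hns ⟨hδs, h⟩
      push_neg at h1
      have h2 : f δ ≤ iS f δ s := le_iS hf ⟨le_refl δ, hδs⟩
      linarith
    have hlowc : f δ - d ≤ f c := by
      have h1 : Filter.Tendsto f (nhdsWithin c (Iio c)) (nhds (f c)) :=
        (hf.tendsto c).mono_left nhdsWithin_le_nhds
      refine ge_of_tendsto h1 ?_
      filter_upwards [Ioo_mem_nhdsLT_of_mem (⟨hδltc, le_refl c⟩ : c ∈ Ioc δ c)] with s hs
      exact (hlow s hs.1.le hs.2).le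
    have hiI : iI f 0 c = f δ - 2 * d := by
      have hsp := iI_split hf hδ0 hδc
      have h1 : iI f 0 δ = f δ - 2 * d := by rw [hcase]; linarith
      have h2 : f δ - d ≤ iI f δ c := by
        refine le_iI hδc fun s hs => ?_
        rcases hs.2.lt_or_eq with h | h
        · exact (hlow s hs.1 h).le
        · rw [h]; exact hlowc
      rw [hsp, h1, min_eq_left (by linarith)]
    have hmemT : c ∈ ST := by
      refine ⟨hδ0.trans hδc, ?_⟩
      rw [ge_iff_le, le_min_iff]
      refine ⟨?_, ?_⟩
      · have hsp := iS_split hf hδ0 hδc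
        have := le_max_right (iS f 0 δ) (iS f δ c)
        linarith [key]
      · rw [hiI]; linarith
    apply le_antisymm
    · exact csInf_le ⟨0, fun t ht => ht.1⟩ hmemT
    · exact le_csInf ⟨c, hmemT⟩ fun t ht => csInf_le hbdd (hsub ht)
  · rw [not_nonempty_iff_eq_empty] at hne
    rw [hne] at hsub
    rw [hne, subset_empty_iff.mp hsub]


lemma iS_neg (f : ℝ → ℝ) (a b : ℝ) : iS (fun s => -f s) a b = - iI f a b := by
  unfold iS iI
  have h : (fun s => -f s) '' Icc a b = -(f '' Icc a b) := by
    ext x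
    simp only [Set.mem_neg, Set.mem_image]
    constructor
    · rintro ⟨s, hs, rfl⟩; exact ⟨s, hs, by ring⟩
    · rintro ⟨s, hs, h⟩; exact ⟨s, hs, by rw [h]; ring⟩
  rw [h, Real.sInf_def, neg_neg]

lemma iI_neg (f : ℝ → ℝ) (a b : ℝ) : iI (fun s => -f s) a b = - iS f a b := by
  unfold iS iI
  have h : (fun s => -f s) '' Icc a b = -(f '' Icc a b) := by
    ext x
    simp only [Set.mem_neg, Set.mem_image]
    constructor
    · rintro ⟨s, hs, rfl⟩; exact ⟨s, hs, by ring⟩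
    · rintro ⟨s, hs, h⟩; exact ⟨s, hs, by rw [h]; ring⟩
  rw [h, Real.sInf_def, neg_neg]

/-- Left-approximation of the running max below `δ`. -/
lemma left_approx_S (hf : Continuous f) {δ ε : ℝ} (hδ : 0 < δ) (hε : 0 < ε) :
    ∃ t, 0 ≤ t ∧ t < δ ∧ iS f 0 δ - ε ≤ iS f 0 t := by
  obtain ⟨s₁, hs₁, hfs₁⟩ := exists_iS hf (le_of_lt hδ)
  rcases hs₁.2.lt_or_eq with h | h
  · exact ⟨s₁, hs₁.1, h, by rw [← hfs₁]; linarith [le_iS hf (⟨hs₁.1, le_refl s₁⟩ : s₁ ∈ Icc 0 s₁)]⟩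
  · obtain ⟨η, hη, hcont⟩ := cont_near hf δ hε
    set t := δ - min η δ / 2 with ht
    have hmin : 0 < min η δ := lt_min hη hδ
    have h1 : 0 ≤ t := by
      have := min_le_right η δ; simp only [ht]; linarith
    have h2 : t < δ := by simp only [ht]; linarith
    have h3 : |t - δ| ≤ η := by
      have := min_le_left η δ
      rw [abs_le]; constructor <;> simp only [ht] <;> linarith
    have h4 := (abs_sub_lt_iff.mp (hcont t h3)).2
    refine ⟨t, h1, h2, ?_⟩
    have h5 : f t ≤ iS f 0 t := le_iS hf ⟨h1, le_refl t⟩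
    rw [← hfs₁, h]
    linarith

lemma left_approx_I (hf : Continuous f) {δ ε : ℝ} (hδ : 0 < δ) (hε : 0 < ε) :
    ∃ t, 0 ≤ t ∧ t < δ ∧ iI f 0 t ≤ iI f 0 δ + ε := by
  obtain ⟨t, h1, h2, h3⟩ := left_approx_S (hf.neg) hδ hε (f := fun s => -f s)
  rw [iS_neg, iS_neg] at h3
  exact ⟨t, h1, h2, by linarith⟩

lemma pathwise (hf : Continuous f) (h0 : f 0 = 0) {d : ℝ} (hd : 0 < d)
    (hex : ∃ t : ℝ, 0 ≤ t ∧ iS f 0 t - iI f 0 t ≥ 2 * d)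
    {δ : ℝ} (hδdef : δ = sInf {t : ℝ | 0 ≤ t ∧ iS f 0 t - iI f 0 t ≥ 2 * d}) :
    (f δ = iS f 0 δ ∨ f δ = iI f 0 δ) ∧
    sInf {t : ℝ | 0 ≤ t ∧ min (iS f 0 t - f t) (f t - iI f 0 t) ≥ d} =
    sInf {t : ℝ | δ ≤ t ∧
      ((f δ = iS f 0 δ ∧ iS f δ t - f t ≥ d) ∨
       (f δ = iI f 0 δ ∧ f t - iI f δ t ≥ d))} := by
  set Sδ := {t : ℝ | 0 ≤ t ∧ iS f 0 t - iI f 0 t ≥ 2 * d} with hSδ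
  have hneS : Sδ.Nonempty := hex
  have hbddS : BddBelow Sδ := ⟨0, fun t ht => ht.1⟩
  have hδ0 : 0 ≤ δ := hδdef ▸ le_csInf hneS fun t ht => ht.1
  have hlb : ∀ t, 0 ≤ t → iS f 0 t - iI f 0 t ≥ 2 * d → δ ≤ t := fun t ht h =>
    hδdef ▸ csInf_le hbddS ⟨ht, h⟩
  -- δ is positive
  have hδpos : 0 < δ := by
    obtain ⟨η, hη, hcont⟩ := cont_near hf 0 (show (0:ℝ) < d / 2 by linarith)
    have hclaim : ∀ t ∈ Sδ, η ≤ t := by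
      rintro t ⟨ht0, ht2⟩
      by_contra hlt
      push_neg at hlt
      have hS : iS f 0 t ≤ d / 2 := by
        refine iS_le ht0 fun s hs => ?_
        have := (abs_sub_lt_iff.mp (hcont s (by
          rw [abs_le]; constructor <;> [linarith [hs.1]; linarith [hs.2]]))).1
        rw [h0] at this; linarith
      have hI : -(d / 2) ≤ iI f 0 t := by
        refine le_iI ht0 fun s hs => ?_
        have := (abs_sub_lt_iff.mp (hcont s (by
          rw [abs_le]; constructor <;> [linarith [hs.1]; linarith [hs.2]]))).2
        rw [h0] at this; linarith
      linarith
    have := hδdef ▸ le_csInf hneS hclaim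
    linarith
  -- exact value at δ
  have hval : iS f 0 δ - iI f 0 δ = 2 * d := by
    have hfδS : f δ ≤ iS f 0 δ := le_iS hf ⟨hδ0, le_refl δ⟩
    have hfδI : iI f 0 δ ≤ f δ := iI_le hf ⟨hδ0, le_refl δ⟩
    have hge : 2 * d ≤ iS f 0 δ - iI f 0 δ := by
      by_contra hX
      push_neg at hX
      set ε := (2 * d - (iS f 0 δ - iI f 0 δ)) / 3 with hεdef
      have hεpos : 0 < ε := by simp only [hεdef]; linarith
      obtain ⟨η, hη, hcont⟩ := cont_near hf δ hεpos
      obtain ⟨t, htS, htlt⟩ := exists_lt_of_csInf_lt hneS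
        (show sInf Sδ < δ + η by rw [← hδdef]; linarith)
      have hδt : δ ≤ t := hδdef ▸ csInf_le hbddS htS
      have h2 : iS f 0 t = max (iS f 0 δ) (iS f δ t) := iS_split hf hδ0 hδt
      have h2' : iI f 0 t = min (iI f 0 δ) (iI f δ t) := iI_split hf hδ0 hδt
      have h3 : iS f δ t ≤ f δ + ε := by
        refine iS_le hδt fun s hs => ?_
        have := (abs_sub_lt_iff.mp (hcont s (by
          rw [abs_le]; constructor <;> [linarith [hs.1]; linarith [hs.2]]))).1
        linarith
      have h4 : f δ - ε ≤ iI f δ t := by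
        refine le_iI hδt fun s hs => ?_
        have := (abs_sub_lt_iff.mp (hcont s (by
          rw [abs_le]; constructor <;> [linarith [hs.1]; linarith [hs.2]]))).2
        linarith
      have h5 : iS f 0 t ≤ iS f 0 δ + ε := by
        rw [h2]; exact max_le (by linarith) (by linarith)
      have h6 : iI f 0 δ - ε ≤ iI f 0 t := by
        rw [h2']; exact le_min (by linarith) (by linarith)
      have h7 : (2:ℝ) * d ≤ iS f 0 t - iI f 0 t := htS.2
      simp only [hεdef] at h5 h6
      linarith
    have hle : iS f 0 δ - iI f 0 δ ≤ 2 * d := by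
      by_contra hX
      push_neg at hX
      set ε := (iS f 0 δ - iI f 0 δ - 2 * d) / 3 with hεdef
      have hεpos : 0 < ε := by simp only [hεdef]; linarith
      obtain ⟨t₁, ht₁0, ht₁δ, ht₁⟩ := left_approx_S hf hδpos hεpos
      obtain ⟨t₂, ht₂0, ht₂δ, ht₂⟩ := left_approx_I hf hδpos hεpos
      set t := max t₁ t₂ with htdef
      have ht0 : 0 ≤ t := le_trans ht₁0 (le_max_left _ _)
      have htδ : t < δ := max_lt ht₁δ ht₂δ
      have hS : iS f 0 δ - ε ≤ iS f 0 t :=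
        le_trans ht₁ (iS_mono hf ht₁0 (le_max_left _ _))
      have hI : iI f 0 t ≤ iI f 0 δ + ε :=
        le_trans (iI_anti hf ht₂0 (le_max_right _ _)) ht₂
      have hnot : t ∉ Sδ := fun hmem => absurd (hlb t ht0 hmem.2) (not_le.mpr htδ)
      have : ¬ (iS f 0 t - iI f 0 t ≥ 2 * d) := fun h => hnot ⟨ht0, h⟩
      push_neg at this
      simp only [hεdef] at hS hI
      linarith
    linarith
  -- at δ, the path is at the max or the min
  have hor : f δ = iS f 0 δ ∨ f δ = iI f 0 δ := by
    by_contra h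
    push_neg at h
    obtain ⟨h1, h2⟩ := h
    obtain ⟨s₁, hs₁, hfs₁⟩ := exists_iS hf hδ0
    obtain ⟨s₂, hs₂, hfs₂⟩ := exists_iI hf hδ0
    have hs₁δ : s₁ < δ := by
      rcases hs₁.2.lt_or_eq with h | h
      · exact h
      · exfalso; rw [h] at hfs₁; exact h1 hfs₁
    have hs₂δ : s₂ < δ := by
      rcases hs₂.2.lt_or_eq with h | h
      · exact h
      · exfalso; rw [h] at hfs₂; exact h2 hfs₂
    set t := max s₁ s₂ with htdef
    have ht0 : 0 ≤ t := le_trans hs₁.1 (le_max_left _ _)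
    have htδ : t < δ := max_lt hs₁δ hs₂δ
    have hS : iS f 0 δ ≤ iS f 0 t := by
      rw [← hfs₁]; exact le_iS hf ⟨hs₁.1, le_max_left _ _⟩
    have hI : iI f 0 t ≤ iI f 0 δ := by
      rw [← hfs₂]; exact iI_le hf ⟨hs₂.1, le_max_right _ _⟩
    have : δ ≤ t := hlb t ht0 (by linarith)
    linarith
  refine ⟨hor, ?_⟩
  rcases hor with hcase | hcase
  · have hnotmin : ¬ f δ = iI f 0 δ := by
      intro h; rw [hcase] at h; linarith
    have hsets : {t : ℝ | δ ≤ t ∧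
        ((f δ = iS f 0 δ ∧ iS f δ t - f t ≥ d) ∨
         (f δ = iI f 0 δ ∧ f t - iI f δ t ≥ d))} =
        {t : ℝ | δ ≤ t ∧ iS f δ t - f t ≥ d} := by
      ext t
      simp only [mem_setOf_eq]
      constructor
      · rintro ⟨h1, ⟨_, h3⟩ | ⟨hb, _⟩⟩
        · exact ⟨h1, h3⟩
        · exact absurd hb hnotmin
      · rintro ⟨h1, h3⟩; exact ⟨h1, Or.inl ⟨hcase, h3⟩⟩
    rw [hsets]
    exact half hf hd hδ0 hval hlb hcase
  · have hnotmax : ¬ f δ = iS f 0 δ := by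
      intro h; rw [hcase] at h; linarith
    set g := fun s => -f s with hg
    have hgc : Continuous g := hf.neg
    have hcase' : g δ = iS g 0 δ := by
      simp only [hg, iS_neg, hcase]
    have hval' : iS g 0 δ - iI g 0 δ = 2 * d := by
      simp only [hg, iS_neg, iI_neg]; linarith
    have hlb' : ∀ t, 0 ≤ t → iS g 0 t - iI g 0 t ≥ 2 * d → δ ≤ t := by
      intro t ht h
      simp only [hg, iS_neg, iI_neg] at h
      exact hlb t ht (by linarith)
    have H := half hgc hd hδ0 hval' hlb' hcase'
    have hL : {t : ℝ | 0 ≤ t ∧ min (iS g 0 t - g t) (g t - iI g 0 t) ≥ d} =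
        {t : ℝ | 0 ≤ t ∧ min (iS f 0 t - f t) (f t - iI f 0 t) ≥ d} := by
      ext t
      simp only [mem_setOf_eq, hg, iS_neg, iI_neg]
      rw [show -iI f 0 t - -f t = f t - iI f 0 t by ring,
        show -f t - -iS f 0 t = iS f 0 t - f t by ring, min_comm]
    have hR : {t : ℝ | δ ≤ t ∧ iS g δ t - g t ≥ d} =
        {t : ℝ | δ ≤ t ∧
          ((f δ = iS f 0 δ ∧ iS f δ t - f t ≥ d) ∨
           (f δ = iI f 0 δ ∧ f t - iI f δ t ≥ d))} := by
      ext t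
      simp only [mem_setOf_eq, hg, iS_neg]
      constructor
      · rintro ⟨h1, h3⟩
        exact ⟨h1, Or.inr ⟨hcase, by linarith⟩⟩
      · rintro ⟨h1, ⟨ha, _⟩ | ⟨_, h3⟩⟩
        · exact absurd ha hnotmax
        · exact ⟨h1, by linarith⟩
    rw [hL, hR] at H
    exact H

end CalTAux
open MeasureTheory ProbabilityTheory Set Real
open scoped NNReal ENNReal

lemma gauss_bound {v : ℝ≥0} (hv : v ≠ 0) (a b : ℝ) :
    gaussianReal 0 v (Ioo a b) ≤ ENNReal.ofReal ((b - a) * (Real.sqrt (2 * π * v))⁻¹) := by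
  rw [gaussianReal_apply 0 hv]
  calc ∫⁻ x in Ioo a b, gaussianPDF 0 v x
      ≤ ∫⁻ _ in Ioo a b, ENNReal.ofReal ((Real.sqrt (2 * π * v))⁻¹) := by
        refine lintegral_mono fun x => ?_
        refine ENNReal.ofReal_le_ofReal ?_
        unfold gaussianPDFReal
        calc (Real.sqrt (2 * π * v))⁻¹ * Real.exp (-(x - 0) ^ 2 / (2 * v))
            ≤ (Real.sqrt (2 * π * v))⁻¹ * 1 := by
              refine mul_le_mul_of_nonneg_left ?_ (by positivity)
              refine Real.exp_le_one_iff.mpr ?_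
              apply div_nonpos_of_nonpos_of_nonneg
              · simp [sq_nonneg]
              · positivity
          _ = (Real.sqrt (2 * π * v))⁻¹ := mul_one _
    _ = ENNReal.ofReal ((Real.sqrt (2 * π * v))⁻¹) * volume (Ioo a b) :=
        setLIntegral_const _ _
    _ = ENNReal.ofReal ((b - a) * (Real.sqrt (2 * π * v))⁻¹) := by
        rw [Real.volume_Ioo, ENNReal.ofReal_mul' (by positivity : (0:ℝ) ≤ (Real.sqrt (2 * π * v))⁻¹), mul_comm]

lemma sqrt_inv_tendsto :
    Filter.Tendsto (fun n : ℕ => (Real.sqrt (2 * π * n))⁻¹) Filter.atTop (nhds 0) := by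
  have hsq : Filter.Tendsto Real.sqrt Filter.atTop Filter.atTop :=
    Filter.tendsto_atTop_atTop_of_monotone (fun a b h => Real.sqrt_le_sqrt h)
      (fun b => ⟨b ^ 2, by rw [Real.sqrt_sq_eq_abs]; exact le_abs_self b⟩)
  have h1 : Filter.Tendsto (fun n : ℕ => 2 * π * (n : ℝ)) Filter.atTop Filter.atTop :=
    (tendsto_natCast_atTop_atTop (R := ℝ)).const_mul_atTop (by positivity)
  exact (hsq.comp h1).inv_tendsto_atTop

theorem calT_two_stage {Ω : Type*} [MeasurableSpace Ω] (P : Measure Ω)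
    (B : ℝ → Ω → ℝ) (hB : IsStdBM P B) (d : ℝ) (hd : 0 < d)
    (T : Ω → ℝ)
    (hT : ∀ ω, T ω = sInf {t : ℝ | 0 ≤ t ∧
      min (runMax B t ω - B t ω) (B t ω - runMin B t ω) ≥ d})
    (δ : Ω → ℝ)
    (hδ : ∀ ω, δ ω = sInf {t : ℝ | 0 ≤ t ∧ runMax B t ω - runMin B t ω ≥ 2 * d}) :
    ∀ᵐ ω ∂P,
      (B (δ ω) ω = runMax B (δ ω) ω ∨ B (δ ω) ω = runMin B (δ ω) ω) ∧
      T ω = sInf {t : ℝ | δ ω ≤ t ∧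
        ((B (δ ω) ω = runMax B (δ ω) ω ∧
          sSup ((fun s => B s ω) '' Set.Icc (δ ω) t) - B t ω ≥ d) ∨
         (B (δ ω) ω = runMin B (δ ω) ω ∧
          B t ω - sInf ((fun s => B s ω) '' Set.Icc (δ ω) t) ≥ d))} := by
  have hprob := hB.isProb
  set E : Set Ω := ⋂ n : ℕ, {ω | |B (n : ℝ) ω| < 2 * d} with hE
  have hE0 : P E = 0 := by
    have hlaw : ∀ n : ℕ, Measure.map (B (n : ℝ)) P
        = gaussianReal 0 (Real.toNNReal (n : ℝ)) := by
      intro n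
      have h := hB.incr 0 (n : ℝ) le_rfl (Nat.cast_nonneg n)
      simp only [hB.init, sub_zero] at h
      exact h
    have hbound : ∀ n : ℕ, 1 ≤ n → P E ≤
        ENNReal.ofReal ((2 * d - -(2 * d)) *
          (Real.sqrt (2 * Real.pi * (Real.toNNReal (n : ℝ) : ℝ)))⁻¹) := by
      intro n hn
      have hv : Real.toNNReal (n : ℝ) ≠ 0 := by
        rw [ne_eq, Real.toNNReal_eq_zero, not_le]
        exact_mod_cast Nat.lt_of_lt_of_le Nat.zero_lt_one hn
      have hsub : E ⊆ B (n : ℝ) ⁻¹' Set.Ioo (-(2 * d)) (2 * d) := by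
        intro ω hω
        have h1 := Set.mem_iInter.mp hω n
        exact abs_lt.mp h1
      calc P E ≤ P (B (n : ℝ) ⁻¹' Set.Ioo (-(2 * d)) (2 * d)) := measure_mono hsub
        _ = Measure.map (B (n : ℝ)) P (Set.Ioo (-(2 * d)) (2 * d)) :=
            (Measure.map_apply (hB.meas _) measurableSet_Ioo).symm
        _ = gaussianReal 0 (Real.toNNReal (n : ℝ)) (Set.Ioo (-(2 * d)) (2 * d)) := by
            rw [hlaw n]
        _ ≤ _ := gauss_bound hv _ _
    have htends : Filter.Tendsto (fun n : ℕ => ENNReal.ofReal ((2 * d - -(2 * d)) *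
        (Real.sqrt (2 * Real.pi * (Real.toNNReal (n : ℝ) : ℝ)))⁻¹))
        Filter.atTop (nhds 0) := by
      have hcoe : ∀ n : ℕ, (Real.toNNReal (n : ℝ) : ℝ) = (n : ℝ) := fun n =>
        Real.coe_toNNReal _ (Nat.cast_nonneg n)
      simp only [hcoe]
      have h1 : Filter.Tendsto (fun n : ℕ => (2 * d - -(2 * d)) *
          (Real.sqrt (2 * Real.pi * (n : ℝ)))⁻¹) Filter.atTop (nhds 0) := by
        have := sqrt_inv_tendsto.const_mul (2 * d - -(2 * d))
        simpa using this
      have h2 := (ENNReal.continuous_ofReal.tendsto 0).comp h1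
      simpa [Function.comp_def] using h2
    have hle : P E ≤ 0 := ge_of_tendsto htends
      (Filter.eventually_atTop.mpr ⟨1, fun n hn => hbound n hn⟩)
    exact le_antisymm hle zero_le
  rw [ae_iff]
  refine measure_mono_null ?_ hE0
  intro ω hω
  simp only [Set.mem_setOf_eq] at hω
  by_contra hmemE
  apply hω
  have hex0 : ∃ n : ℕ, 2 * d ≤ |B (n : ℝ) ω| := by
    by_contra hc
    push_neg at hc
    exact hmemE (Set.mem_iInter.mpr fun n => hc n)
  obtain ⟨n, hn⟩ := hex0
  have hf : Continuous (fun s => B s ω) := hB.cont ω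
  have h0 : B (0 : ℝ) ω = 0 := hB.init ω
  have hex : ∃ t : ℝ, 0 ≤ t ∧
      CalTAux.iS (fun s => B s ω) 0 t - CalTAux.iI (fun s => B s ω) 0 t ≥ 2 * d := by
    refine ⟨(n : ℝ), Nat.cast_nonneg n, ?_⟩
    have h1 : B (n : ℝ) ω ≤ CalTAux.iS (fun s => B s ω) 0 (n : ℝ) :=
      CalTAux.le_iS hf ⟨Nat.cast_nonneg n, le_refl _⟩
    have h2 : B (0 : ℝ) ω ≤ CalTAux.iS (fun s => B s ω) 0 (n : ℝ) :=
      CalTAux.le_iS hf ⟨le_refl 0, Nat.cast_nonneg n⟩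
    have h3 : CalTAux.iI (fun s => B s ω) 0 (n : ℝ) ≤ B (n : ℝ) ω :=
      CalTAux.iI_le hf ⟨Nat.cast_nonneg n, le_refl _⟩
    have h4 : CalTAux.iI (fun s => B s ω) 0 (n : ℝ) ≤ B (0 : ℝ) ω :=
      CalTAux.iI_le hf ⟨le_refl 0, Nat.cast_nonneg n⟩
    rw [h0] at h2 h4
    rcases le_abs.mp hn with h | h
    · linarith
    · linarith
  have H := CalTAux.pathwise hf h0 hd hex (hδ ω)
  exact ⟨H.1, by rw [hT ω]; exact H.2⟩
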